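/- The nerve functors reflect isomorphisms: let f : G → H be a graph map. Suppose either (1) there is m ≥ 1 such that for every n ≥ 0 post-composition with f gives a bijection from the set of graph maps I_m^{□n} → G to the set of graph maps I_m^{□n} → H, or (2) for every n ≥ 0 post-composition with f gives a bijection from the set of stable graph maps I_∞^{□n} → G to the set of stable graph maps I_∞^{□n} → H. Then f is an isomorphism of graphs: f is a bijection on vertices and its inverse function is a graph map H → G. -/

import Mathlib

/-- A map of simple graphs: adjacent vertices are sent to equal or adjacent vertices. -/
def IsGraphMap {V W : Type*} (G : SimpleGraph V) (H : SimpleGraph W) (f : V → W) : Prop :=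
  ∀ ⦃v w : V⦄, G.Adj v w → f v = f w ∨ H.Adj (f v) (f w)

theorem IsGraphMap.comp {U V W : Type*} {G : SimpleGraph U} {H : SimpleGraph V}
    {K : SimpleGraph W} {f : U → V} {g : V → W}
    (hf : IsGraphMap G H f) (hg : IsGraphMap H K g) : IsGraphMap G K (g ∘ f) := by
  intro v w h
  rcases hf h with he | ha
  · exact Or.inl (congrArg g he)
  · exact hg ha

/-- The interval graph `I_m`, with vertices `{0, …, m}` and edges `i ∼ i+1`. -/
def intervalG (m : ℕ) : SimpleGraph (Fin (m + 1)) where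
  Adj i j := (i : ℕ) + 1 = (j : ℕ) ∨ (j : ℕ) + 1 = (i : ℕ)
  symm := ⟨fun i j h => Or.symm h⟩
  loopless := ⟨fun i h => by rcases h with h | h <;> omega⟩

/-- The infinite interval graph `I_∞`, with vertices `ℤ` and edges `i ∼ i+1`. -/
def intLineG : SimpleGraph ℤ where
  Adj a b := a + 1 = b ∨ b + 1 = a
  symm := ⟨fun a b h => Or.symm h⟩
  loopless := ⟨fun a h => by rcases h with h | h <;> omega⟩

/-- The `n`-fold box power `G^{□n}` of a graph. -/
def boxPow {V : Type*} (G : SimpleGraph V) (n : ℕ) : SimpleGraph (Fin n → V) where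
  Adj v w := ∃ i, G.Adj (v i) (w i) ∧ ∀ j, j ≠ i → v j = w j
  symm := ⟨by
    rintro v w ⟨i, ha, he⟩
    exact ⟨i, ha.symm, fun j hj => (he j hj).symm⟩⟩
  loopless := ⟨by
    rintro v ⟨i, ha, -⟩
    exact G.ne_of_adj ha rfl⟩

/-- A map `g : I_∞^{□n} → G` is stable: in each direction `(i, ε)` it is eventually
constant. -/
def Stable {V : Type*} (n : ℕ) (g : (Fin n → ℤ) → V) : Prop :=
  ∀ (i : Fin n) (ε : Bool), ∃ M : ℕ, ∀ (w : Fin n → ℤ) (t : ℤ), (M : ℤ) < t →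
    g (Function.update w i (if ε then t else -t)) =
      g (Function.update w i (if ε then (M : ℤ) else -(M : ℤ)))

theorem Stable.comp {V W : Type*} {n : ℕ} {g : (Fin n → ℤ) → V} (hg : Stable n g)
    (f : V → W) : Stable n (f ∘ g) := by
  intro i ε
  obtain ⟨M, hM⟩ := hg i ε
  exact ⟨M, fun w t ht => congrArg f (hM w t ht)⟩


lemma isGraphMap_of_boxPow_zero {V W : Type*} (G : SimpleGraph V) (K : SimpleGraph W)
    (g : (Fin 0 → V) → W) : IsGraphMap (boxPow G 0) K g := by
  rintro v w ⟨i, -, -⟩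
  exact i.elim0

lemma stable_zero {V : Type*} (g : (Fin 0 → ℤ) → V) : Stable 0 g := fun i => i.elim0

/-- The nerve functors reflect isomorphisms: if post-composition with a graph map
`f : G → H` is a bijection on `m`-cubes `I_m^{□n} → ·` for all `n` (for some `m ≥ 1`), or
on stable cubes `I_∞^{□n} → ·` for all `n`, then `f` is an isomorphism of graphs. -/
theorem nerve_reflects_isos {V W : Type*} (G : SimpleGraph V) (H : SimpleGraph W)
    (f : V → W) (hf : IsGraphMap G H f)
    (h : (∃ m : ℕ, 1 ≤ m ∧ ∀ n : ℕ,
        Function.Bijective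
          (fun g : {g : (Fin n → Fin (m + 1)) → V // IsGraphMap (boxPow (intervalG m) n) G g} =>
            (⟨f ∘ g.1, g.2.comp hf⟩ :
              {h : (Fin n → Fin (m + 1)) → W // IsGraphMap (boxPow (intervalG m) n) H h}))) ∨
      (∀ n : ℕ,
        Function.Bijective
          (fun g : {g : (Fin n → ℤ) → V // IsGraphMap (boxPow intLineG n) G g ∧ Stable n g} =>
            (⟨f ∘ g.1, g.2.1.comp hf, g.2.2.comp f⟩ :
              {h : (Fin n → ℤ) → W // IsGraphMap (boxPow intLineG n) H h ∧ Stable n h})))) :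
    Function.Bijective f ∧
      ∃ finv : W → V, IsGraphMap H G finv ∧
        Function.LeftInverse finv f ∧ Function.RightInverse finv f := by
  obtain ⟨hbijf, key⟩ : Function.Bijective f ∧
      (∀ v w : W, H.Adj v w → ∃ a b : V, f a = v ∧ f b = w ∧ G.Adj a b) := by
    rcases h with ⟨m, hm, hbij⟩ | hbij
    · constructor
      · constructor
        · intro a b hab
          have key := (hbij 0).injective
            (a₁ := ⟨fun _ => a, isGraphMap_of_boxPow_zero _ _ _⟩)
            (a₂ := ⟨fun _ => b, isGraphMap_of_boxPow_zero _ _ _⟩)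
            (Subtype.ext (funext fun _ => hab))
          exact congrFun (congrArg Subtype.val key) (fun i => i.elim0)
        · intro w
          obtain ⟨g, hg⟩ := (hbij 0).surjective ⟨fun _ => w, isGraphMap_of_boxPow_zero _ _ _⟩
          exact ⟨g.1 (fun i => i.elim0), congrFun (congrArg Subtype.val hg) _⟩
      · intro v w hvw
        have hmap : IsGraphMap (boxPow (intervalG m) 1) H
            (fun x : Fin 1 → Fin (m + 1) => if (x 0 : ℕ) = 0 then v else w) := by
          rintro x y ⟨i, hadj, -⟩
          have hi : i = 0 := Subsingleton.elim _ _
          subst hi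
          beta_reduce
          by_cases hx : (x 0 : ℕ) = 0
          · have hy : (y 0 : ℕ) ≠ 0 := by rcases (hadj : (x 0 : ℕ) + 1 = (y 0 : ℕ) ∨ (y 0 : ℕ) + 1 = (x 0 : ℕ)) with h | h <;> omega
            rw [if_pos hx, if_neg hy]
            exact Or.inr hvw
          · by_cases hy : (y 0 : ℕ) = 0
            · rw [if_neg hx, if_pos hy]
              exact Or.inr hvw.symm
            · rw [if_neg hx, if_neg hy]
              exact Or.inl rfl
        obtain ⟨g, hg⟩ := (hbij 1).surjective ⟨_, hmap⟩
        have hg' : f ∘ g.1 = fun x : Fin 1 → Fin (m + 1) => if (x 0 : ℕ) = 0 then v else w :=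
          congrArg Subtype.val hg
        set c0 : Fin (m + 1) := ⟨0, by omega⟩ with hc0
        set c1 : Fin (m + 1) := ⟨1, by omega⟩ with hc1
        have hfa : f (g.1 (fun _ => c0)) = v := by
          have := congrFun hg' (fun _ => c0)
          exact this.trans (if_pos rfl)
        have hfb : f (g.1 (fun _ => c1)) = w := by
          have := congrFun hg' (fun _ => c1)
          exact this.trans (if_neg (show ¬ (1:ℕ) = 0 by omega))
        have hadj01 : (boxPow (intervalG m) 1).Adj (fun _ => c0) (fun _ => c1) :=
          ⟨0, (show ((c0 : ℕ) + 1 = (c1 : ℕ) ∨ (c1 : ℕ) + 1 = (c0 : ℕ)) from Or.inl (by simp [hc0, hc1])), fun j hj => absurd (Subsingleton.elim j 0) hj⟩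
        rcases g.2 hadj01 with he | ha
        · exact absurd (hfa ▸ hfb ▸ congrArg f he) hvw.ne
        · exact ⟨_, _, hfa, hfb, ha⟩
    · constructor
      · constructor
        · intro a b hab
          have key := (hbij 0).injective
            (a₁ := ⟨fun _ => a, isGraphMap_of_boxPow_zero _ _ _, stable_zero _⟩)
            (a₂ := ⟨fun _ => b, isGraphMap_of_boxPow_zero _ _ _, stable_zero _⟩)
            (Subtype.ext (funext fun _ => hab))
          exact congrFun (congrArg Subtype.val key) (fun i => i.elim0)
        · intro w
          obtain ⟨g, hg⟩ := (hbij 0).surjective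
            ⟨fun _ => w, isGraphMap_of_boxPow_zero _ _ _, stable_zero _⟩
          exact ⟨g.1 (fun i => i.elim0), congrFun (congrArg Subtype.val hg) _⟩
      · intro v w hvw
        have hmap : IsGraphMap (boxPow intLineG 1) H
            (fun x : Fin 1 → ℤ => if x 0 ≤ 0 then v else w) := by
          rintro x y ⟨i, hadj, -⟩
          have hi : i = 0 := Subsingleton.elim _ _
          subst hi
          beta_reduce
          by_cases hx : x 0 ≤ 0
          · by_cases hy : y 0 ≤ 0
            · rw [if_pos hx, if_pos hy]
              exact Or.inl rfl
            · rw [if_pos hx, if_neg hy]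
              exact Or.inr hvw
          · by_cases hy : y 0 ≤ 0
            · rw [if_neg hx, if_pos hy]
              exact Or.inr hvw.symm
            · rw [if_neg hx, if_neg hy]
              exact Or.inl rfl
        have hstab : Stable 1 (fun x : Fin 1 → ℤ => if x 0 ≤ 0 then v else w) := by
          intro i ε
          have hi : i = 0 := Subsingleton.elim _ _
          subst hi
          refine ⟨1, fun u t ht => ?_⟩
          simp only [Function.update_self]
          cases ε
          · rw [if_neg Bool.false_ne_true, if_neg Bool.false_ne_true,
              if_pos (show -t ≤ 0 by omega), if_pos (show -(((1:ℕ)):ℤ) ≤ 0 by omega)]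
          · rw [if_pos rfl, if_pos rfl,
              if_neg (show ¬ t ≤ 0 by omega), if_neg (show ¬ (((1:ℕ)):ℤ) ≤ 0 by omega)]
        obtain ⟨g, hg⟩ := (hbij 1).surjective ⟨_, hmap, hstab⟩
        have hg' : f ∘ g.1 = fun x : Fin 1 → ℤ => if x 0 ≤ 0 then v else w :=
          congrArg Subtype.val hg
        have hfa : f (g.1 (fun _ => 0)) = v := by
          have := congrFun hg' (fun _ => 0)
          simpa using this
        have hfb : f (g.1 (fun _ => 1)) = w := by
          have := congrFun hg' (fun _ => 1)
          simpa using this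
        have hadj01 : (boxPow intLineG 1).Adj (fun _ => (0 : ℤ)) (fun _ => 1) :=
          ⟨0, (show ((0:ℤ) + 1 = 1 ∨ (1:ℤ) + 1 = 0) from Or.inl (by norm_num)), fun j hj => absurd (Subsingleton.elim j 0) hj⟩
        rcases g.2.1 hadj01 with he | ha
        · exact absurd (hfa ▸ hfb ▸ congrArg f he) hvw.ne
        · exact ⟨_, _, hfa, hfb, ha⟩
  let e := Equiv.ofBijective f hbijf
  refine ⟨hbijf, ⇑e.symm, ?_, fun a => e.symm_apply_apply a, fun w => e.apply_symm_apply w⟩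
  intro v w hvw
  obtain ⟨a, b, ha, hb, hab⟩ := key v w hvw
  have h1 : e.symm v = a := by rw [← ha]; exact e.symm_apply_apply a
  have h2 : e.symm w = b := by rw [← hb]; exact e.symm_apply_apply b
  rw [h1, h2]
  exact Or.inr hab
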